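/- Let G be a finite undirected simple graph, H a digraph, σ a linear order on V(G), and let D' be a σ-lexicographic-product instance of (G, H) that is η-good for (G, H). Then α⃗(D') ≤ α(G) · α⃗(H) + |V(G)| · |V(H)|^η. -/

import Mathlib

/-- A set `S` of vertices of the digraph with arc relation `A` is acyclic. -/
def AcyclicSet {V : Type*} (A : V → V → Prop) (S : Set V) : Prop :=
  ∀ x, ¬ Relation.TransGen (fun a b => a ∈ S ∧ b ∈ S ∧ A a b) x x

/-- The acyclic number `α⃗(D)`: the maximum size of an acyclic set of vertices. -/
noncomputable def acyclicNum {V : Type*} [Fintype V] (A : V → V → Prop) : ℕ :=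
  sSup {n | ∃ S : Finset V, AcyclicSet A ↑S ∧ S.card = n}

/-- The independence number of an undirected simple graph. -/
noncomputable def graphIndepNum {α : Type*} [Fintype α] (G : SimpleGraph α) : ℕ :=
  sSup {n | ∃ S : Finset α, (∀ u ∈ S, ∀ v ∈ S, ¬ G.Adj u v) ∧ S.card = n}

/-- `D` is a `σ`-lexicographic-product instance of `(G, H)`. -/
def IsLexInstance {α β : Type*} [LinearOrder α] (G : SimpleGraph α) (HA : β → β → Prop)
    (D : α × β → α × β → Prop) : Prop :=
  (∀ u : α, ∀ a b : β, (D (u, a) (u, b) ↔ HA a b)) ∧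
  (∀ u v : α, G.Adj u v → ∀ a b : β, (D (u, a) (v, b) ↔ ¬ D (v, b) (u, a))) ∧
  (∀ u v : α, u ≠ v → ¬ G.Adj u v → u < v →
    ∀ a b : β, D (u, a) (v, b) ∧ ¬ D (v, b) (u, a))

/-- `D` is `η`-good for `(G, H)`: for every edge `{u,v}` of `G` and all subsets `A_u`
of the cloud of `u` and `A_v` of the cloud of `v` with `|A_u|, |A_v| ≥ |V(H)|^η`, the
induced subdigraph `D[A_u ∪ A_v]` contains a directed cycle. -/
def EtaGood {α β : Type*} [Fintype β] (G : SimpleGraph α)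
    (D : α × β → α × β → Prop) (η : ℝ) : Prop :=
  ∀ u v : α, G.Adj u v → ∀ Au Av : Finset (α × β),
    (∀ p ∈ Au, p.1 = u) → (∀ p ∈ Av, p.1 = v) →
    (Fintype.card β : ℝ) ^ η ≤ (Au.card : ℝ) →
    (Fintype.card β : ℝ) ^ η ≤ (Av.card : ℝ) →
    ¬ AcyclicSet D (↑Au ∪ ↑Av)

lemma acyclicSet_mono {V : Type*} {A : V → V → Prop} {S T : Set V}
    (h : S ⊆ T) (hT : AcyclicSet A T) : AcyclicSet A S := by
  intro x hx
  exact hT x (Relation.TransGen.mono (fun a b hab => ⟨h hab.1, h hab.2.1, hab.2.2⟩) _ _ hx)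

/-- If `D'` is a `σ`-lexicographic-product instance of `(G, H)` which is `η`-good for
`(G, H)`, then `α⃗(D') ≤ α(G)·α⃗(H) + |V(G)|·|V(H)|^η`. -/
theorem stmt5 {α β : Type*} [Fintype α] [Fintype β] [LinearOrder α]
    (G : SimpleGraph α) (HA : β → β → Prop) (hH : ∀ b, ¬ HA b b)
    (D : α × β → α × β → Prop) (hD : IsLexInstance G HA D)
    (η : ℝ) (hgood : EtaGood G D η) :
    (acyclicNum D : ℝ) ≤ (graphIndepNum G : ℝ) * (acyclicNum HA : ℝ)
      + (Fintype.card α : ℝ) * (Fintype.card β : ℝ) ^ η := by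
  classical
  -- the acyclic number of D is attained by some finset S
  have hne : ({n | ∃ S : Finset (α × β), AcyclicSet D ↑S ∧ S.card = n}).Nonempty := by
    refine ⟨0, ∅, ?_, Finset.card_empty⟩
    intro x hx
    cases hx with
    | single h => simp at h
    | tail _ h => simp at h
  have hbdd : BddAbove {n | ∃ S : Finset (α × β), AcyclicSet D ↑S ∧ S.card = n} := by
    refine ⟨Fintype.card (α × β), fun n hn => ?_⟩
    obtain ⟨S, _, rfl⟩ := hn
    exact Finset.card_le_univ S |>.trans_eq (Finset.card_univ)
  obtain ⟨S, hS, hcard⟩ := Nat.sSup_mem hne hbdd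
  set f : α → Finset (α × β) := fun u => S.filter (fun p => p.1 = u) with hf
  have hcardsum : S.card = ∑ u, (f u).card :=
    Finset.card_eq_sum_card_fiberwise (fun x _ => Finset.mem_univ x.1)
  set B : Finset α := Finset.univ.filter (fun u => (Fintype.card β : ℝ) ^ η ≤ ((f u).card : ℝ))
    with hB
  -- B is independent
  have hBind : ∀ u ∈ B, ∀ v ∈ B, ¬ G.Adj u v := by
    intro u hu v hv hadj
    have h1 := (Finset.mem_filter.mp hu).2
    have h2 := (Finset.mem_filter.mp hv).2
    refine hgood u v hadj (f u) (f v)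
      (fun p hp => (Finset.mem_filter.mp hp).2)
      (fun p hp => (Finset.mem_filter.mp hp).2) h1 h2 ?_
    refine acyclicSet_mono ?_ hS
    exact Set.union_subset (Finset.coe_subset.mpr (Finset.filter_subset _ _))
      (Finset.coe_subset.mpr (Finset.filter_subset _ _))
  have hbddG : BddAbove {n | ∃ T : Finset α, (∀ u ∈ T, ∀ v ∈ T, ¬ G.Adj u v) ∧ T.card = n} := by
    refine ⟨Fintype.card α, fun n hn => ?_⟩
    obtain ⟨T, _, rfl⟩ := hn
    exact Finset.card_le_univ T |>.trans_eq (Finset.card_univ)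
  have hBcard : B.card ≤ graphIndepNum G := le_csSup hbddG ⟨B, hBind, rfl⟩
  -- each fiber has size at most acyclicNum HA
  have hbddH : BddAbove {n | ∃ T : Finset β, AcyclicSet HA ↑T ∧ T.card = n} := by
    refine ⟨Fintype.card β, fun n hn => ?_⟩
    obtain ⟨T, _, rfl⟩ := hn
    exact Finset.card_le_univ T |>.trans_eq (Finset.card_univ)
  have hfiber : ∀ u : α, (f u).card ≤ acyclicNum HA := by
    intro u
    set T : Finset β := (f u).image Prod.snd with hT
    have hmemT : ∀ b ∈ T, (u, b) ∈ S := by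
      intro b hb
      obtain ⟨p, hp, hpb⟩ := Finset.mem_image.mp hb
      have hp1 : p.1 = u := (Finset.mem_filter.mp hp).2
      have : p = (u, b) := Prod.ext hp1 hpb
      exact this ▸ (Finset.mem_filter.mp hp).1
    have hacy : AcyclicSet HA ↑T := by
      intro b hb
      refine hS (u, b) ?_
      refine Relation.TransGen.lift (fun c => (u, c)) ?_ _ _ hb
      rintro c d ⟨hc, hd, hcd⟩
      exact ⟨hmemT c hc, hmemT d hd, (hD.1 u c d).mpr hcd⟩
    have hinj : Set.InjOn Prod.snd ((f u : Finset (α × β)) : Set (α × β)) := by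
      intro p hp q hq hpq
      have hp1 : p.1 = u := (Finset.mem_filter.mp (Finset.mem_coe.mp hp)).2
      have hq1 : q.1 = u := (Finset.mem_filter.mp (Finset.mem_coe.mp hq)).2
      exact Prod.ext (hp1.trans hq1.symm) hpq
    have hcardT : T.card = (f u).card := Finset.card_image_of_injOn hinj
    exact hcardT ▸ le_csSup hbddH ⟨T, hacy, rfl⟩
  -- arithmetic
  have hsplit := Finset.sum_filter_add_sum_filter_not Finset.univ
    (fun u => (Fintype.card β : ℝ) ^ η ≤ ((f u).card : ℝ)) (fun u => ((f u).card : ℝ))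
  have hBsum : ∑ u ∈ B, ((f u).card : ℝ) ≤ (graphIndepNum G : ℝ) * (acyclicNum HA : ℝ) := by
    calc ∑ u ∈ B, ((f u).card : ℝ) ≤ ∑ _u ∈ B, (acyclicNum HA : ℝ) :=
          Finset.sum_le_sum (fun u _ => by exact_mod_cast hfiber u)
      _ = (B.card : ℝ) * (acyclicNum HA : ℝ) := by rw [Finset.sum_const]; ring
      _ ≤ (graphIndepNum G : ℝ) * (acyclicNum HA : ℝ) := by
          apply mul_le_mul_of_nonneg_right _ (by positivity)
          exact_mod_cast hBcard
  have hrpow : (0:ℝ) ≤ (Fintype.card β : ℝ) ^ η := Real.rpow_nonneg (by positivity) η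
  have hCsum : ∑ u ∈ Finset.univ.filter
      (fun u => ¬ ((Fintype.card β : ℝ) ^ η ≤ ((f u).card : ℝ))), ((f u).card : ℝ)
      ≤ (Fintype.card α : ℝ) * (Fintype.card β : ℝ) ^ η := by
    calc _ ≤ ∑ _u ∈ Finset.univ.filter
          (fun u => ¬ ((Fintype.card β : ℝ) ^ η ≤ ((f u).card : ℝ))),
          (Fintype.card β : ℝ) ^ η :=
          Finset.sum_le_sum (fun u hu => le_of_lt
            (lt_of_not_ge (Finset.mem_filter.mp hu).2))
      _ = ((Finset.univ.filter _).card : ℝ) * (Fintype.card β : ℝ) ^ η := by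
          rw [Finset.sum_const]; ring
      _ ≤ (Fintype.card α : ℝ) * (Fintype.card β : ℝ) ^ η := by
          apply mul_le_mul_of_nonneg_right _ hrpow
          exact_mod_cast (Finset.card_le_univ _).trans_eq Finset.card_univ
  calc (acyclicNum D : ℝ) = (S.card : ℝ) := by rw [hcard]; rfl
    _ = ∑ u, ((f u).card : ℝ) := by exact_mod_cast congrArg Nat.cast hcardsum
    _ = ∑ u ∈ B, ((f u).card : ℝ) + ∑ u ∈ Finset.univ.filter
          (fun u => ¬ ((Fintype.card β : ℝ) ^ η ≤ ((f u).card : ℝ))), ((f u).card : ℝ) :=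
        hsplit.symm
    _ ≤ _ := add_le_add hBsum hCsum
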